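/- Suppose R is normalized (R 1 = 1) and has the Riesz property with Riesz family (μ_x)_{x ∈ X}. Then for all measurable sets A, B ⊆ X and every x ∈ X one has μ_x(σ⁻¹(A) ∩ B) = 1_A(x) · μ_x(B), where 1_A is the indicator function of A (equivalently, μ_x(σ⁻¹(A) ∩ B) = δ_x(A) · μ_x(B) with δ_x the Dirac measure at x). -/
import Mathlib


open MeasureTheory
open scoped ENNReal

/-- If a normalized transfer operator `R` has the Riesz property with Riesz
family `(μ_x)`, then `μ_x(σ⁻¹(A) ∩ B) = 1_A(x) · μ_x(B)` for all measurable
sets `A, B` and all `x`. -/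
theorem stmt_16 {X : Type*} [MeasurableSpace X] (σ : X → X)
    (hσ : Measurable σ) (hσsurj : Function.Surjective σ)
    (R : (X → ℝ) → (X → ℝ))
    (hadd : ∀ f g : X → ℝ, R (f + g) = R f + R g)
    (hsmul : ∀ (c : ℝ) (f : X → ℝ), R (c • f) = c • R f)
    (hmeas : ∀ f : X → ℝ, Measurable f → Measurable (R f))
    (hpos : ∀ f : X → ℝ, 0 ≤ f → 0 ≤ R f)
    (hpull : ∀ f g : X → ℝ, Measurable f → Measurable g →
      R ((f ∘ σ) * g) = f * R g)
    (hnorm : R 1 = 1)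
    (μ : X → Measure X) (hfin : ∀ x, IsFiniteMeasure (μ x))
    (hRiesz : ∀ f : X → ℝ, Measurable f → (∃ C : ℝ, ∀ y, |f y| ≤ C) →
      ∀ x, R f x = ∫ y, f y ∂(μ x)) :
    ∀ A B : Set X, MeasurableSet A → MeasurableSet B → ∀ x : X,
      μ x (σ ⁻¹' A ∩ B) = A.indicator (fun _ => (1 : ℝ≥0∞)) x * μ x B := by
  intro A B hA hB x
  haveI := hfin x
  have hApre : MeasurableSet (σ ⁻¹' A ∩ B) := (hσ hA).inter hB
  have hbd : ∀ (S : Set X), ∃ C : ℝ, ∀ y, |S.indicator (1 : X → ℝ) y| ≤ C := by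
    intro S
    refine ⟨1, fun y => ?_⟩
    by_cases h : y ∈ S <;> simp [Set.indicator, h]
  have hfun : (A.indicator (1 : X → ℝ) ∘ σ) * B.indicator 1
      = (σ ⁻¹' A ∩ B).indicator 1 := by
    funext y
    by_cases h1 : σ y ∈ A <;> by_cases h2 : y ∈ B <;>
      simp [Set.indicator, h1, h2]
  have key := hpull (A.indicator 1) (B.indicator 1)
    (measurable_one.indicator hA) (measurable_one.indicator hB)
  rw [hfun] at key
  have hL := hRiesz _ (measurable_one.indicator hApre) (hbd _) x
  have hRB := hRiesz _ (measurable_one.indicator hB) (hbd _) x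
  have hintL : ∫ y, (σ ⁻¹' A ∩ B).indicator (1 : X → ℝ) y ∂(μ x)
      = (μ x (σ ⁻¹' A ∩ B)).toReal := integral_indicator_one hApre
  have hintR : ∫ y, B.indicator (1 : X → ℝ) y ∂(μ x)
      = (μ x B).toReal := integral_indicator_one hB
  have keyx : R ((σ ⁻¹' A ∩ B).indicator 1) x
      = A.indicator (1 : X → ℝ) x * R (B.indicator 1) x := congrFun key x
  rw [hL, hRB, hintL, hintR] at keyx
  by_cases hx : x ∈ A
  · simp only [Set.indicator_of_mem hx, Pi.one_apply, one_mul] at keyx ⊢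
    exact (ENNReal.toReal_eq_toReal_iff' (measure_ne_top _ _) (measure_ne_top _ _)).mp keyx
  · simp only [Set.indicator_of_notMem hx, Pi.one_apply, zero_mul] at keyx ⊢
    exact (ENNReal.toReal_eq_zero_iff _).mp keyx |>.resolve_right (measure_ne_top _ _)
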